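/- For all unitaries U, V ∈ U(d^n), one has E_{h ∈ F_d^{2n}} |⟨∂_h U, ∂_h V⟩|² = ‖U*V‖_{P²}⁴, i.e., the average over h ∈ F_d^{2n} of |d^{−n} tr((W_h U W_h* U*)* (W_h V W_h* V*))|² equals E_{h₁,h₂ ∈ F_d^{2n}} d^{−n} tr(∂_{h₂}∂_{h₁}(U*V)). -/

import Mathlib

open Matrix Complex

namespace CH

variable (d n : ℕ) [NeZero d]

/-- Phase space `F_d^{2n}`, written as pairs `(u, v)` with `u, v ∈ F_d^n`. -/
abbrev PSpace := (Fin n → ZMod d) × (Fin n → ZMod d)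

/-- Linear maps on `ℂ^{F_d^n}`, as matrices. -/
abbrev Mat := Matrix (Fin n → ZMod d) (Fin n → ZMod d) ℂ

/-- `ω = e^{2πi/d}`. -/
noncomputable def omg : ℂ := Complex.exp (2 * Real.pi * Complex.I / d)

/-- `τ = (-1)^d e^{iπ/d}`. -/
noncomputable def tau : ℂ := (-1 : ℂ) ^ d * Complex.exp (Real.pi * Complex.I / d)

/-- `D = 2d` if `d = 2`, else `D = d`. -/
def Dd : ℕ := if d = 2 then 4 else d

/-- The translation operator `X^v`, with `X^v |u⟩ = |u + v⟩`. -/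
noncomputable def Xop (v : Fin n → ZMod d) : Mat d n :=
  Matrix.of fun u u' => if u = u' + v then 1 else 0

/-- The phase operator `Z^v`, with `Z^v |u⟩ = ω^{u·v} |u⟩`. -/
noncomputable def Zop (v : Fin n → ZMod d) : Mat d n :=
  Matrix.diagonal fun u => omg d ^ (∑ i, u i * v i : ZMod d).val

/-- The Weyl operator `W_{(u,v)} = τ^{-(|u₁v₁| + ⋯ + |uₙvₙ|)} Z^u X^v`. -/
noncomputable def Weyl (a : PSpace d n) : Mat d n :=
  tau d ^ (-(∑ i, ((a.1 i * a.2 i).val : ℤ))) • (Zop d n a.1 * Xop d n a.2)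

/-- Normalized trace inner product `⟨A,B⟩ = d^{-n} tr(A* B)`. -/
noncomputable def trInner (A B : Mat d n) : ℂ := ((d : ℂ) ^ n)⁻¹ * (Aᴴ * B).trace

/-- Normalized Frobenius norm `‖A‖₂ = ⟨A,A⟩^{1/2}`. -/
noncomputable def hsNorm (A : Mat d n) : ℝ := Real.sqrt (trInner d n A A).re

/-- Pauli derivative `∂_h U = W_h U W_h* U*`. -/
noncomputable def pderiv (h : PSpace d n) (U : Mat d n) : Mat d n :=
  Weyl d n h * U * (Weyl d n h)ᴴ * Uᴴ

/-- The quantity `‖U‖_{P^k}^{2^k} = E_{h₁,…,h_k} d^{-n} tr(∂_{h_k} ⋯ ∂_{h₁} U)`. -/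
noncomputable def pq : ℕ → Mat d n → ℂ
  | 0, U => ((d : ℂ) ^ n)⁻¹ * U.trace
  | (k+1), U => ((d : ℂ) ^ (2*n))⁻¹ * ∑ h : PSpace d n, pq k (pderiv d n h U)

/-- The `k`-th Pauli uniformity norm `‖U‖_{P^k}`, the `2^k`-th root of `pq k U`. -/
noncomputable def pnorm (k : ℕ) (U : Mat d n) : ℝ := (pq d n k U).re ^ (((2:ℝ) ^ k)⁻¹)

/-- The Pauli group `C^{(1)} = {τ^p W_h : p ∈ Z_D, h ∈ F_d^{2n}}`. -/
def pauliGroup : Set (Mat d n) :=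
  {U | ∃ (p : ℕ) (h : PSpace d n), U = tau d ^ p • Weyl d n h}

/-- The Clifford hierarchy. -/
def cliff : ℕ → Set (Mat d n)
  | 0 => {U | ∃ θ : ℝ, U = Complex.exp (θ * Complex.I) • (1 : Mat d n)}
  | 1 => pauliGroup d n
  | (k+2) => {U | U ∈ unitary (Mat d n) ∧
      ∀ P ∈ pauliGroup d n, U * P * Uᴴ ∈ cliff (k+1)}

/-- Pauli polynomials of degree at most `k`. -/
def ppoly : ℕ → Set (Mat d n)
  | 0 => {U | ∃ θ : ℝ, U = Complex.exp (θ * Complex.I) • (1 : Mat d n)}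
  | (k+1) => {U | U ∈ unitary (Mat d n) ∧ ∀ h : PSpace d n, pderiv d n h U ∈ ppoly k}

/-- Symplectic form `[(u,v),(u',v')] = u·v' - u'·v` on `F_d^{2n}`. -/
def symp (a b : PSpace d n) : ZMod d :=
  (∑ i, a.1 i * b.2 i) - (∑ i, b.1 i * a.2 i)

/-- Multiplication of the Heisenberg group. -/
def heisMul (β : PSpace d n → PSpace d n → ZMod (Dd d))
    (x y : ZMod (Dd d) × PSpace d n) : ZMod (Dd d) × PSpace d n :=
  (x.1 + y.1 + β x.2 y.2, x.2 + y.2)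

section Aux

lemma dC_ne_zero : (d : ℂ) ≠ 0 := Nat.cast_ne_zero.mpr (NeZero.ne d)

lemma omg_ne_zero : omg d ≠ 0 := Complex.exp_ne_zero _

lemma omg_pow_d : omg d ^ d = 1 := by
  rw [omg, ← Complex.exp_nat_mul]
  rw [show (d:ℂ) * (2 * (Real.pi:ℂ) * Complex.I / d) = 2 * (Real.pi:ℂ) * Complex.I by
    rw [mul_div_assoc']
    exact mul_div_cancel_left₀ _ (dC_ne_zero d)]
  exact Complex.exp_two_pi_mul_I

lemma omg_ne_one (hd : d.Prime) : omg d ≠ 1 := by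
  intro h
  rw [omg, Complex.exp_eq_one_iff] at h
  obtain ⟨k, hk⟩ := h
  have hd0 : (d:ℂ) ≠ 0 := dC_ne_zero d
  have h2 : (2 * (Real.pi:ℂ) * Complex.I) ≠ 0 := by
    simp [Real.pi_ne_zero, Complex.I_ne_zero]
  rw [div_eq_iff hd0] at hk
  have hkd : ((k * d : ℤ) : ℂ) * (2 * (Real.pi:ℂ) * Complex.I) = 1 * (2 * (Real.pi:ℂ) * Complex.I) := by
    push_cast
    rw [one_mul]; linear_combination -hk
  have hZ : (k * d : ℤ) = 1 := by exact_mod_cast mul_right_cancel₀ h2 hkd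
  have hdvd : (d:ℤ) ∣ 1 := ⟨k, by rw [← hZ]; ring⟩
  have : d ∣ 1 := by exact_mod_cast hdvd
  exact hd.one_lt.ne' (Nat.dvd_one.mp this)

lemma conj_omg_mul : (starRingEnd ℂ) (omg d) * omg d = 1 := by
  rw [omg, ← Complex.exp_conj, ← Complex.exp_add]
  have : (starRingEnd ℂ) (2 * (Real.pi:ℂ) * Complex.I / d) = -(2 * (Real.pi:ℂ) * Complex.I / d) := by
    simp [map_div₀, Complex.conj_I, map_ofNat]
    ring
  rw [this, neg_add_cancel, Complex.exp_zero]

lemma tau_mul_star : tau d * (starRingEnd ℂ) (tau d) = 1 := by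
  rw [tau, _root_.map_mul, map_pow, map_neg, _root_.map_one, ← Complex.exp_conj]
  have h1 : (starRingEnd ℂ) ((Real.pi:ℂ) * Complex.I / d) = -((Real.pi:ℂ) * Complex.I / d) := by
    simp [map_div₀, Complex.conj_I, map_ofNat]
    ring
  rw [h1]
  have h2 : ((-1:ℂ)^d) * ((-1:ℂ)^d) = 1 := by
    rw [← mul_pow]; norm_num
  calc ((-1:ℂ)^d * Complex.exp ((Real.pi:ℂ) * Complex.I / d)) *
        ((-1:ℂ)^d * Complex.exp (-((Real.pi:ℂ) * Complex.I / d)))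
      = ((-1:ℂ)^d * (-1:ℂ)^d) * (Complex.exp ((Real.pi:ℂ) * Complex.I / d) *
          Complex.exp (-((Real.pi:ℂ) * Complex.I / d))) := by ring
    _ = 1 := by rw [h2, ← Complex.exp_add, add_neg_cancel, Complex.exp_zero, one_mul]

noncomputable def ee (t : ZMod d) : ℂ := omg d ^ t.val

lemma omg_pow_mod (a : ℕ) : omg d ^ (a % d) = omg d ^ a := by
  conv_rhs => rw [← Nat.div_add_mod a d]
  rw [pow_add, pow_mul, omg_pow_d, one_pow, one_mul]

lemma ee_add (s t : ZMod d) : ee d (s + t) = ee d s * ee d t := by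
  rw [ee, ee, ee, ZMod.val_add, omg_pow_mod, pow_add]

lemma ee_zero : ee d 0 = 1 := by
  rw [ee, ZMod.val_zero, pow_zero]

lemma ee_ne_zero (t : ZMod d) : ee d t ≠ 0 := pow_ne_zero _ (omg_ne_zero d)

lemma conj_ee (t : ZMod d) : (starRingEnd ℂ) (ee d t) = ee d (-t) := by
  have h1 : (starRingEnd ℂ) (ee d t) * ee d t = 1 := by
    rw [ee, map_pow, ← mul_pow, conj_omg_mul, one_pow]
  have h2 : ee d (-t) * ee d t = 1 := by
    rw [← ee_add, neg_add_cancel, ee_zero]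
  exact mul_right_cancel₀ (ee_ne_zero d t) (h1.trans h2.symm)

lemma ee_sum_ne (hd : d.Prime) {w : Fin n → ZMod d} (hw : w ≠ 0) :
    ∑ u : Fin n → ZMod d, ee d (∑ i, w i * u i) = 0 := by
  haveI : Fact d.Prime := ⟨hd⟩
  obtain ⟨i, hi⟩ : ∃ i, w i ≠ 0 := by
    by_contra h; push_neg at h; exact hw (funext h)
  set u0 : Fin n → ZMod d := Pi.single i (w i)⁻¹ with hu0
  have hdot : ∑ j, w j * u0 j = 1 := by
    rw [Finset.sum_eq_single i]
    · simp [hu0, Pi.single_eq_same, mul_inv_cancel₀ hi]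
    · intro j _ hj; simp [hu0, Pi.single_eq_of_ne hj]
    · simp
  set S := ∑ u : Fin n → ZMod d, ee d (∑ i, w i * u i) with hS
  have key : ee d 1 * S = S := by
    nth_rewrite 2 [hS]
    rw [← Equiv.sum_comp (Equiv.addLeft u0) (fun u => ee d (∑ i, w i * u i))]
    rw [hS, Finset.mul_sum]
    apply Finset.sum_congr rfl
    intro u _
    rw [← ee_add]
    congr 1
    have : ∀ j, w j * (Equiv.addLeft u0 u) j = w j * u0 j + w j * u j := by
      intro j; simp [Equiv.addLeft, Pi.add_apply]; ring
    rw [Finset.sum_congr rfl (fun j _ => this j), Finset.sum_add_distrib, hdot]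
  have h1 : (ee d 1 - 1) * S = 0 := by rw [sub_mul, one_mul, key, sub_self]
  have h2 : ee d 1 - 1 ≠ 0 := by
    rw [ee, ZMod.val_one_eq_one_mod]
    rw [Nat.mod_eq_of_lt hd.one_lt, pow_one]
    exact sub_ne_zero.mpr (omg_ne_one d hd)
  exact (mul_eq_zero.mp h1).resolve_left h2

lemma ee_sum (hd : d.Prime) (w : Fin n → ZMod d) :
    ∑ u : Fin n → ZMod d, ee d (∑ i, w i * u i) = if w = 0 then ((d:ℂ))^n else 0 := by
  by_cases hw : w = 0
  · subst hw
    simp only [Pi.zero_apply, zero_mul, Finset.sum_const_zero, ee_zero, if_true]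
    rw [Finset.sum_const, Finset.card_univ]
    simp [Fintype.card_fun, ZMod.card]
  · rw [if_neg hw]; exact ee_sum_ne d n hd hw

lemma Zop_eq (u : Fin n → ZMod d) :
    Zop d n u = Matrix.diagonal (fun a => ee d (∑ i, a i * u i)) := rfl

lemma Xop_conjTranspose (v : Fin n → ZMod d) : (Xop d n v)ᴴ = Xop d n (-v) := by
  ext a b
  simp only [Xop, Matrix.conjTranspose_apply, Matrix.of_apply]
  have hiff : (b = a + v) ↔ (a = b + -v) := by constructor <;> (intro h; simp [h])
  rw [if_congr hiff rfl rfl]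
  split <;> simp

lemma X_mul_apply (v : Fin n → ZMod d) (M : Mat d n) (a b : Fin n → ZMod d) :
    (Xop d n v * M) a b = M (a - v) b := by
  rw [Matrix.mul_apply, Finset.sum_eq_single (a - v)]
  · simp [Xop]
  · intro c _ hc
    simp only [Xop, Matrix.of_apply]
    rw [if_neg, zero_mul]
    intro h; exact hc (by rw [h, add_sub_cancel_right])
  · simp

lemma mul_X_apply (w : Fin n → ZMod d) (M : Mat d n) (a b : Fin n → ZMod d) :
    (M * Xop d n w) a b = M a (b + w) := by
  rw [Matrix.mul_apply, Finset.sum_eq_single (b + w)]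
  · simp [Xop]
  · intro c _ hc
    simp only [Xop, Matrix.of_apply]
    rw [if_neg, mul_zero]
    exact fun h => hc h
  · simp

lemma XMX_apply (v : Fin n → ZMod d) (M : Mat d n) (a b : Fin n → ZMod d) :
    (Xop d n v * M * (Xop d n v)ᴴ) a b = M (a - v) (b - v) := by
  rw [Xop_conjTranspose, mul_X_apply, X_mul_apply, ← sub_eq_add_neg]

lemma ZXMXZ_apply (u v : Fin n → ZMod d) (M : Mat d n) (a b : Fin n → ZMod d) :
    ((Zop d n u * Xop d n v) * M * (Zop d n u * Xop d n v)ᴴ) a b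
      = ee d (∑ i, a i * u i) * M (a - v) (b - v) * (starRingEnd ℂ) (ee d (∑ i, b i * u i)) := by
  rw [Matrix.conjTranspose_mul]
  have : (Zop d n u * Xop d n v) * M * ((Xop d n v)ᴴ * (Zop d n u)ᴴ)
      = Zop d n u * (Xop d n v * M * (Xop d n v)ᴴ) * (Zop d n u)ᴴ := by
    simp only [Matrix.mul_assoc]
  rw [this, Zop_eq, Matrix.diagonal_conjTranspose]
  rw [Matrix.mul_diagonal, Matrix.diagonal_mul, XMX_apply]
  simp [Pi.star_apply, mul_comm, mul_assoc, mul_left_comm]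

lemma Xop_zero : Xop d n 0 = 1 := by
  ext a b
  simp [Xop, Matrix.one_apply]

lemma Xop_mul (v w : Fin n → ZMod d) : Xop d n v * Xop d n w = Xop d n (w + v) := by
  ext a b
  rw [X_mul_apply]
  simp only [Xop, Matrix.of_apply]
  have hiff : (a - v = b + w) ↔ (a = b + (w + v)) := by
    constructor
    · intro h
      have h2 : a = (a - v) + v := by abel
      rw [h2, h]; abel
    · intro h; rw [h]; abel
  rw [if_congr hiff rfl rfl]

lemma Zop_conj_mul (u : Fin n → ZMod d) : (Zop d n u)ᴴ * Zop d n u = 1 := by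
  ext a b
  rw [Zop_eq, Matrix.diagonal_conjTranspose, Matrix.diagonal_mul_diagonal,
    Matrix.diagonal_apply, Matrix.one_apply]
  by_cases hab : a = b
  · rw [if_pos hab, if_pos hab]
    simp only [Pi.star_apply, Complex.star_def, conj_ee]
    rw [← ee_add, neg_add_cancel, ee_zero]
  · rw [if_neg hab, if_neg hab]

end Aux

section Aux2

lemma weyl_star_mul (h : PSpace d n) : (Weyl d n h)ᴴ * Weyl d n h = 1 := by
  rw [Weyl, Matrix.conjTranspose_smul, Matrix.smul_mul, Matrix.mul_smul, smul_smul]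
  have hc : (starRingEnd ℂ) (tau d ^ (-(∑ i, ((h.1 i * h.2 i).val : ℤ))))
      * tau d ^ (-(∑ i, ((h.1 i * h.2 i).val : ℤ))) = 1 := by
    rw [show ((starRingEnd ℂ) (tau d ^ (-(∑ i, ((h.1 i * h.2 i).val : ℤ))))) =
      ((starRingEnd ℂ) (tau d)) ^ (-(∑ i, ((h.1 i * h.2 i).val : ℤ))) from map_zpow₀ _ _ _]
    rw [← mul_zpow, mul_comm ((starRingEnd ℂ) (tau d)) (tau d), tau_mul_star, _root_.one_zpow]
  rw [Complex.star_def, hc, one_smul]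
  rw [Matrix.conjTranspose_mul]
  calc (Xop d n h.2)ᴴ * (Zop d n h.1)ᴴ * (Zop d n h.1 * Xop d n h.2)
      = (Xop d n h.2)ᴴ * ((Zop d n h.1)ᴴ * Zop d n h.1) * Xop d n h.2 := by
        simp only [Matrix.mul_assoc]
    _ = 1 := by
        rw [Zop_conj_mul, Matrix.mul_one, Xop_conjTranspose, Xop_mul, add_neg_cancel, Xop_zero]

lemma weyl_conj (h : PSpace d n) (M : Mat d n) :
    Weyl d n h * M * (Weyl d n h)ᴴ
      = (Zop d n h.1 * Xop d n h.2) * M * (Zop d n h.1 * Xop d n h.2)ᴴ := by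
  rw [Weyl, Matrix.conjTranspose_smul, Matrix.smul_mul, Matrix.smul_mul, Matrix.mul_smul, smul_smul]
  have hc : tau d ^ (-(∑ i, ((h.1 i * h.2 i).val : ℤ)))
      * star (tau d ^ (-(∑ i, ((h.1 i * h.2 i).val : ℤ)))) = 1 := by
    rw [Complex.star_def,
      show ((starRingEnd ℂ) (tau d ^ (-(∑ i, ((h.1 i * h.2 i).val : ℤ))))) =
      ((starRingEnd ℂ) (tau d)) ^ (-(∑ i, ((h.1 i * h.2 i).val : ℤ))) from map_zpow₀ _ _ _]
    rw [← mul_zpow, tau_mul_star, _root_.one_zpow]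
  rw [hc, one_smul]

lemma twirl_mat (hd : d.Prime) (M : Mat d n) :
    ∑ h : PSpace d n, Weyl d n h * M * (Weyl d n h)ᴴ
      = ((d:ℂ)^n * M.trace) • (1 : Mat d n) := by
  ext a b
  rw [Matrix.sum_apply]
  have h1 : ∀ h : PSpace d n, (Weyl d n h * M * (Weyl d n h)ᴴ) a b
      = ee d (∑ i, (a - b) i * h.1 i) * M (a - h.2) (b - h.2) := by
    intro h
    rw [weyl_conj, ZXMXZ_apply, conj_ee]
    have h2 : ∑ i, (a - b) i * h.1 i = (∑ i, a i * h.1 i) + (-(∑ i, b i * h.1 i)) := by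
      rw [← Finset.sum_neg_distrib, ← Finset.sum_add_distrib]
      apply Finset.sum_congr rfl
      intro i _
      simp only [Pi.sub_apply]
      ring
    rw [h2, ee_add]
    ring
  rw [Finset.sum_congr rfl (fun h _ => h1 h), Fintype.sum_prod_type]
  rw [show (∑ u : Fin n → ZMod d, ∑ v : Fin n → ZMod d,
      ee d (∑ i, (a - b) i * u i) * M (a - v) (b - v))
    = (∑ u : Fin n → ZMod d, ee d (∑ i, (a - b) i * u i))
      * (∑ v : Fin n → ZMod d, M (a - v) (b - v)) from (Finset.sum_mul_sum _ _ _ _).symm]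
  rw [ee_sum d n hd]
  rw [Matrix.smul_apply, Matrix.one_apply, smul_eq_mul]
  by_cases hab : a = b
  · subst hab
    rw [if_pos (sub_self a), if_pos rfl, mul_one]
    congr 1
    rw [show (∑ v : Fin n → ZMod d, M (a - v) (a - v))
      = ∑ c : Fin n → ZMod d, M c c from Equiv.sum_comp (Equiv.subLeft a) (fun c => M c c)]
    rfl
  · rw [if_neg (sub_ne_zero.mpr hab), if_neg hab, zero_mul, mul_zero]

lemma twirl_trace (hd : d.Prime) (M N : Mat d n) :
    ∑ h : PSpace d n, (Weyl d n h * M * (Weyl d n h)ᴴ * N).trace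
      = (d:ℂ)^n * M.trace * N.trace := by
  rw [← Matrix.trace_sum, ← Finset.sum_mul, twirl_mat d n hd M, Matrix.smul_mul,
    Matrix.one_mul, Matrix.trace_smul, smul_eq_mul]

lemma pq_succ (k : ℕ) (B : Mat d n) :
    pq d n (k+1) B = ((d:ℂ)^(2*n))⁻¹ * ∑ h : PSpace d n, pq d n k (pderiv d n h B) := rfl

lemma pq_one_eq (hd : d.Prime) (B : Mat d n) :
    pq d n 1 B = (((d:ℂ)^n)⁻¹ * B.trace) * (starRingEnd ℂ) (((d:ℂ)^n)⁻¹ * B.trace) := by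
  have hp : ((d:ℂ)^n) ≠ 0 := pow_ne_zero _ (dC_ne_zero d)
  rw [pq_succ]
  have h0 : ∀ h : PSpace d n, pq d n 0 (pderiv d n h B)
      = ((d:ℂ)^n)⁻¹ * (Weyl d n h * B * (Weyl d n h)ᴴ * Bᴴ).trace := fun h => rfl
  rw [Finset.sum_congr rfl (fun h _ => h0 h), ← Finset.mul_sum, twirl_trace d n hd,
    Matrix.trace_conjTranspose]
  rw [_root_.map_mul, show (starRingEnd ℂ) (((d:ℂ)^n)⁻¹) = ((d:ℂ)^n)⁻¹ by
    rw [map_inv₀, map_pow, Complex.conj_natCast]]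
  rw [two_mul, pow_add, Complex.star_def]
  field_simp

lemma trace_key (h : PSpace d n) (U V : Mat d n) :
    ((pderiv d n h U)ᴴ * pderiv d n h V).trace = (pderiv d n h (Uᴴ * V)).trace := by
  have hW : ∀ A : Mat d n, (Weyl d n h)ᴴ * (Weyl d n h * A) = A := by
    intro A
    rw [← Matrix.mul_assoc, weyl_star_mul, Matrix.one_mul]
  simp only [pderiv, Matrix.conjTranspose_mul, Matrix.conjTranspose_conjTranspose]
  simp only [Matrix.mul_assoc]
  rw [hW]
  rw [Matrix.trace_mul_comm]
  simp only [Matrix.mul_assoc]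

end Aux2

theorem stmt16 (d n : ℕ) [NeZero d] (hd : d.Prime) (hn : 1 ≤ n)
    (U V : Mat d n) (hU : U ∈ unitary (Mat d n)) (hV : V ∈ unitary (Mat d n)) :
    ((d : ℂ) ^ (2 * n))⁻¹ *
        ∑ h : PSpace d n,
          ((‖trInner d n (pderiv d n h U) (pderiv d n h V)‖ ^ 2 : ℝ) : ℂ)
      = pq d n 2 (Uᴴ * V) := by
  have hpt : ∀ h : PSpace d n,
      ((‖trInner d n (pderiv d n h U) (pderiv d n h V)‖ ^ 2 : ℝ) : ℂ)
        = pq d n 1 (pderiv d n h (Uᴴ * V)) := by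
    intro h
    set z := trInner d n (pderiv d n h U) (pderiv d n h V) with hz
    have habs : ((‖z‖ ^ 2 : ℝ) : ℂ) = z * (starRingEnd ℂ) z := by
      rw [Complex.sq_norm]
      exact (Complex.mul_conj z).symm
    have hzz : z = ((d:ℂ)^n)⁻¹ * (pderiv d n h (Uᴴ * V)).trace := by
      rw [hz, trInner, trace_key]
    rw [habs, hzz, pq_one_eq d n hd]
  rw [Finset.sum_congr rfl (fun h _ => hpt h)]
  exact (pq_succ d n 1 (Uᴴ * V)).symm

end CH
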